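/- Let p be a prime and t ≥ 1 an integer. Let K = {g ∈ GSp₄(ℤ_p) : the four entries g₃₁, g₃₂, g₄₁, g₄₂ of g all lie in p^t·ℤ_p} be the depth-t Siegel parahoric subgroup, and let s = diag(1,1,p,p) ∈ GSp₄(ℚ_p). Then the double coset K·s·K ⊂ GSp₄(ℚ_p) is the disjoint union of the p³ left cosets n̄(p^t x, p^t y, p^t z)·s·K, where (x,y,z) ranges over {0,1,…,p−1}³. -/

import Mathlib

open Matrix

/-- The antisymmetric form defining `GSp₄`. -/
def Jmat (R : Type*) [CommRing R] : Matrix (Fin 4) (Fin 4) R :=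
  !![0, 0, 0, 1;
     0, 0, 1, 0;
     0, -1, 0, 0;
     -1, 0, 0, 0]

/-- Membership in `GSp₄(R)`: `gᵀ J g = ν J` for some unit `ν`. -/
def InGSp4 {R : Type*} [CommRing R] (g : Matrix (Fin 4) (Fin 4) R) : Prop :=
  ∃ ν : Rˣ, gᵀ * Jmat R * g = (ν : R) • Jmat R

/-- The unipotent element `n̄(x,y,z)` of the opposite Siegel parabolic. -/
def nbar {R : Type*} [CommRing R] (x y z : R) : Matrix (Fin 4) (Fin 4) R :=
  !![1, 0, 0, 0;
     0, 1, 0, 0;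
     x, y, 1, 0;
     z, x, 0, 1]

/-- The depth-`t` Siegel parahoric subgroup of `GSp₄(ℤ_p)`, viewed as a subset of
the `4 × 4` matrices over `ℚ_p`: integral matrices lying in `GSp₄(ℤ_p)` whose
lower-left `2 × 2` block vanishes modulo `p^t`. -/
def SiegelParahoric (p : ℕ) [Fact p.Prime] (t : ℕ) :
    Set (Matrix (Fin 4) (Fin 4) ℚ_[p]) :=
  {g | ∃ g' : Matrix (Fin 4) (Fin 4) ℤ_[p],
    g = g'.map (fun a => (a : ℚ_[p])) ∧ InGSp4 g' ∧
    (p : ℤ_[p]) ^ t ∣ g' 2 0 ∧ (p : ℤ_[p]) ^ t ∣ g' 2 1 ∧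
    (p : ℤ_[p]) ^ t ∣ g' 3 0 ∧ (p : ℤ_[p]) ^ t ∣ g' 3 1}

/-- The element `s = diag(1,1,p,p)` of `GSp₄(ℚ_p)`. -/
noncomputable def sMat (p : ℕ) [Fact p.Prime] : Matrix (Fin 4) (Fin 4) ℚ_[p] :=
  !![1, 0, 0, 0;
     0, 1, 0, 0;
     0, 0, (p : ℚ_[p]), 0;
     0, 0, 0, (p : ℚ_[p])]

/-- The left coset `n̄(p^t x, p^t y, p^t z) · s · K` for `(x,y,z) ∈ {0,…,p−1}³`. -/
def Ucoset (p : ℕ) [Fact p.Prime] (t : ℕ) (v : Fin p × Fin p × Fin p) :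
    Set (Matrix (Fin 4) (Fin 4) ℚ_[p]) :=
  {m | ∃ k ∈ SiegelParahoric p t,
    m = nbar ((p : ℚ_[p]) ^ t * ((v.1 : ℕ) : ℚ_[p]))
             ((p : ℚ_[p]) ^ t * ((v.2.1 : ℕ) : ℚ_[p]))
             ((p : ℚ_[p]) ^ t * ((v.2.2 : ℕ) : ℚ_[p])) * sMat p * k}

set_option maxHeartbeats 1600000

section Generic
variable {R : Type*} [CommRing R]

lemma det_fin_four {R : Type*} [CommRing R] (M : Matrix (Fin 4) (Fin 4) R) :
    M.det =
      M 0 0 * M 1 1 * M 2 2 * M 3 3 - M 0 0 * M 1 1 * M 2 3 * M 3 2 -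
      M 0 0 * M 1 2 * M 2 1 * M 3 3 + M 0 0 * M 1 2 * M 2 3 * M 3 1 +
      M 0 0 * M 1 3 * M 2 1 * M 3 2 - M 0 0 * M 1 3 * M 2 2 * M 3 1 -
      M 0 1 * M 1 0 * M 2 2 * M 3 3 + M 0 1 * M 1 0 * M 2 3 * M 3 2 +
      M 0 1 * M 1 2 * M 2 0 * M 3 3 - M 0 1 * M 1 2 * M 2 3 * M 3 0 -
      M 0 1 * M 1 3 * M 2 0 * M 3 2 + M 0 1 * M 1 3 * M 2 2 * M 3 0 +
      M 0 2 * M 1 0 * M 2 1 * M 3 3 - M 0 2 * M 1 0 * M 2 3 * M 3 1 -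
      M 0 2 * M 1 1 * M 2 0 * M 3 3 + M 0 2 * M 1 1 * M 2 3 * M 3 0 +
      M 0 2 * M 1 3 * M 2 0 * M 3 1 - M 0 2 * M 1 3 * M 2 1 * M 3 0 -
      M 0 3 * M 1 0 * M 2 1 * M 3 2 + M 0 3 * M 1 0 * M 2 2 * M 3 1 +
      M 0 3 * M 1 1 * M 2 0 * M 3 2 - M 0 3 * M 1 1 * M 2 2 * M 3 0 -
      M 0 3 * M 1 2 * M 2 0 * M 3 1 + M 0 3 * M 1 2 * M 2 1 * M 3 0 := by
  rw [Matrix.det_succ_row_zero, Fin.sum_univ_four]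
  norm_num [Matrix.det_fin_three, Matrix.submatrix_apply, Fin.succAbove,
    Fin.lt_def, Fin.ext_iff]
  norm_num [show ((3 : Fin 4) : ℕ) = 3 from rfl, show (Fin.succ 2 : Fin 4) = 3 from rfl,
    show (Fin.castSucc 2 : Fin 4) = 2 from rfl]
  ring

def sdiag (u : R) : Matrix (Fin 4) (Fin 4) R :=
  !![1, 0, 0, 0; 0, 1, 0, 0; 0, 0, u, 0; 0, 0, 0, u]

lemma nbar_mul (a b c d e f : R) :
    nbar a b c * nbar d e f = nbar (a+d) (b+e) (c+f) := by
  ext i j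
  fin_cases i <;> fin_cases j <;>
    simp [nbar, Matrix.mul_apply, Fin.sum_univ_four, Matrix.vecHead, Matrix.vecTail] <;> ring

lemma nbar_zero : (nbar 0 0 0 : Matrix (Fin 4) (Fin 4) R) = 1 := by
  ext i j
  fin_cases i <;> fin_cases j <;> simp [nbar, Matrix.one_apply, Matrix.vecHead, Matrix.vecTail]

lemma nbar_J (a b c : R) : (nbar a b c)ᵀ * Jmat R * nbar a b c = Jmat R := by
  ext i j
  fin_cases i <;> fin_cases j <;>
    simp [nbar, Jmat, Matrix.mul_apply, Fin.sum_univ_four, Matrix.vecHead, Matrix.vecTail] <;> ring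

lemma sdiag_transpose (u : R) : (sdiag u)ᵀ = sdiag u := by
  ext i j
  fin_cases i <;> fin_cases j <;> simp [sdiag, Matrix.vecHead, Matrix.vecTail]

lemma sdiag_J (u : R) : sdiag u * Jmat R * sdiag u = u • Jmat R := by
  ext i j
  fin_cases i <;> fin_cases j <;>
    simp [sdiag, Jmat, Matrix.mul_apply, Fin.sum_univ_four, Matrix.vecHead, Matrix.vecTail]

lemma eta_fin_four' (M : Matrix (Fin 4) (Fin 4) R) :
    M = !![M 0 0, M 0 1, M 0 2, M 0 3;
           M 1 0, M 1 1, M 1 2, M 1 3;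
           M 2 0, M 2 1, M 2 2, M 2 3;
           M 3 0, M 3 1, M 3 2, M 3 3] := by
  ext i j
  fin_cases i <;> fin_cases j <;> rfl

lemma hS_aux (u c1 c2 c3 w20 w21 w30 w31
    a00 a01 a02 a03 a10 a11 a12 a13 a20 a21 a22 a23 a30 a31 a32 a33 : R)
    (h20 : a20 = c1 * a00 + c2 * a10 + u * w20)
    (h21 : a21 = c1 * a01 + c2 * a11 + u * w21)
    (h30 : a30 = c3 * a00 + c1 * a10 + u * w30)
    (h31 : a31 = c3 * a01 + c1 * a11 + u * w31) :
    sdiag u * !![a00, a01, u * a02, u * a03;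
                 a10, a11, u * a12, u * a13;
                 w20, w21, a22 - c1 * a02 - c2 * a12, a23 - c1 * a03 - c2 * a13;
                 w30, w31, a32 - c3 * a02 - c1 * a12, a33 - c3 * a03 - c1 * a13]
      = nbar (-c1) (-c2) (-c3) *
          !![a00, a01, a02, a03; a10, a11, a12, a13;
             a20, a21, a22, a23; a30, a31, a32, a33] * sdiag u := by
  ext i j
  fin_cases i <;> fin_cases j <;>
    simp [sdiag, nbar, Matrix.mul_apply, Matrix.vecMul, dotProduct,
      Fin.sum_univ_four, Matrix.vecHead, Matrix.vecTail] <;>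
    first
      | ring1
      | linear_combination h20
      | linear_combination -h20
      | linear_combination h21
      | linear_combination -h21
      | linear_combination h30
      | linear_combination -h30
      | linear_combination h31
      | linear_combination -h31

lemma InGSp4.mul {g h : Matrix (Fin 4) (Fin 4) R} (hg : InGSp4 g) (hh : InGSp4 h) :
    InGSp4 (g * h) := by
  obtain ⟨ν, hν⟩ := hg
  obtain ⟨μ, hμ⟩ := hh
  refine ⟨ν * μ, ?_⟩
  have : (g * h)ᵀ * Jmat R * (g * h) = hᵀ * (gᵀ * Jmat R * g) * h := by
    simp only [transpose_mul, Matrix.mul_assoc]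
  rw [this, hν, Matrix.mul_smul, Matrix.smul_mul, hμ, smul_smul, Units.val_mul]

lemma buildH [IsDomain R] (u : R) (hu : u ≠ 0) (g : Matrix (Fin 4) (Fin 4) R)
    (ν : Rˣ) (hν : gᵀ * Jmat R * g = (ν : R) • Jmat R)
    (c1 c2 c3 w20 w21 w30 w31 : R) (H : Matrix (Fin 4) (Fin 4) R)
    (hH : H = !![g 0 0, g 0 1, u * g 0 2, u * g 0 3;
                 g 1 0, g 1 1, u * g 1 2, u * g 1 3;
                 w20, w21, g 2 2 - c1 * g 0 2 - c2 * g 1 2, g 2 3 - c1 * g 0 3 - c2 * g 1 3;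
                 w30, w31, g 3 2 - c3 * g 0 2 - c1 * g 1 2, g 3 3 - c3 * g 0 3 - c1 * g 1 3])
    (h20 : g 2 0 = c1 * g 0 0 + c2 * g 1 0 + u * w20)
    (h21 : g 2 1 = c1 * g 0 1 + c2 * g 1 1 + u * w21)
    (h30 : g 3 0 = c3 * g 0 0 + c1 * g 1 0 + u * w30)
    (h31 : g 3 1 = c3 * g 0 1 + c1 * g 1 1 + u * w31) :
    (Hᵀ * Jmat R * H = (ν : R) • Jmat R) ∧
      (H 2 0 = w20 ∧ H 2 1 = w21 ∧ H 3 0 = w30 ∧ H 3 1 = w31) ∧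
      nbar c1 c2 c3 * (sdiag u * H) = g * sdiag u := by
  have hS : sdiag u * H = nbar (-c1) (-c2) (-c3) * g * sdiag u := by
    subst hH
    conv_rhs => rw [eta_fin_four' g]
    exact hS_aux u c1 c2 c3 w20 w21 w30 w31 _ _ _ _ _ _ _ _ _ _ _ _ _ _ _ _
      h20 h21 h30 h31
  refine ⟨?_, ⟨by rw [hH]; rfl, by rw [hH]; rfl, by rw [hH]; rfl, by rw [hH]; rfl⟩, ?_⟩
  · have hW : (nbar (-c1) (-c2) (-c3) * g)ᵀ * Jmat R * (nbar (-c1) (-c2) (-c3) * g)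
        = (ν : R) • Jmat R := by
      calc (nbar (-c1) (-c2) (-c3) * g)ᵀ * Jmat R * (nbar (-c1) (-c2) (-c3) * g)
          = gᵀ * ((nbar (-c1) (-c2) (-c3))ᵀ * Jmat R * nbar (-c1) (-c2) (-c3)) * g := by
            simp only [transpose_mul, Matrix.mul_assoc]
        _ = (ν : R) • Jmat R := by rw [nbar_J]; exact hν
    have e1 : (sdiag u * H)ᵀ * Jmat R * (sdiag u * H) = u • (Hᵀ * Jmat R * H) := by
      calc (sdiag u * H)ᵀ * Jmat R * (sdiag u * H)
          = Hᵀ * ((sdiag u)ᵀ * Jmat R * sdiag u) * H := by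
            simp only [transpose_mul, Matrix.mul_assoc]
        _ = Hᵀ * (u • Jmat R) * H := by rw [sdiag_transpose, sdiag_J]
        _ = u • (Hᵀ * Jmat R * H) := by
            rw [Matrix.mul_smul, Matrix.smul_mul]
    have e2 : (sdiag u * H)ᵀ * Jmat R * (sdiag u * H) = u • ((ν : R) • Jmat R) := by
      rw [hS]
      calc (nbar (-c1) (-c2) (-c3) * g * sdiag u)ᵀ * Jmat R *
            (nbar (-c1) (-c2) (-c3) * g * sdiag u)
          = (sdiag u)ᵀ * ((nbar (-c1) (-c2) (-c3) * g)ᵀ * Jmat R *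
              (nbar (-c1) (-c2) (-c3) * g)) * sdiag u := by
            simp only [transpose_mul, Matrix.mul_assoc]
        _ = (sdiag u)ᵀ * ((ν : R) • Jmat R) * sdiag u := by rw [hW]
        _ = (ν : R) • (sdiag u * Jmat R * sdiag u) := by
            rw [sdiag_transpose, Matrix.mul_smul, Matrix.smul_mul]
        _ = u • ((ν : R) • Jmat R) := by rw [sdiag_J, smul_comm]
    have e3 : u • (Hᵀ * Jmat R * H) = u • ((ν : R) • Jmat R) := by rw [← e1, e2]
    ext i j
    have := congrArg (fun M => M i j) e3
    simp only [Matrix.smul_apply, smul_eq_mul] at this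
    exact mul_left_cancel₀ hu this
  · rw [hS, ← Matrix.mul_assoc, ← Matrix.mul_assoc, nbar_mul]
    simp [nbar_zero]

end Generic

section Padic
variable {p : ℕ} [Fact p.Prime]

lemma toZMod_zero_iff (z : ℤ_[p]) :
    PadicInt.toZMod z = 0 ↔ (p : ℤ_[p]) ∣ z := by
  rw [← Ideal.mem_span_singleton, ← PadicInt.maximalIdeal_eq_span_p,
    ← PadicInt.ker_toZMod, RingHom.mem_ker]

lemma dvd_of_not_isUnit {z : ℤ_[p]} (h : ¬ IsUnit z) : (p : ℤ_[p]) ∣ z := by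
  rw [← PadicInt.norm_lt_one_iff_dvd]
  rcases lt_or_eq_of_le (PadicInt.norm_le_one z) with h1 | h1
  · exact h1
  · exact absurd (PadicInt.isUnit_iff.2 h1) h

lemma detA_isUnit {g : Matrix (Fin 4) (Fin 4) ℤ_[p]}
    (hg : InGSp4 g) (h20 : (p:ℤ_[p]) ∣ g 2 0) (h21 : (p:ℤ_[p]) ∣ g 2 1)
    (h30 : (p:ℤ_[p]) ∣ g 3 0) (h31 : (p:ℤ_[p]) ∣ g 3 1) :
    IsUnit (g 0 0 * g 1 1 - g 0 1 * g 1 0) := by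
  obtain ⟨ν, hν⟩ := hg
  have hJdet : (Jmat ℤ_[p]).det = 1 := by
    rw [det_fin_four]; simp [Jmat]
  have h1 := congrArg Matrix.det hν
  rw [Matrix.det_mul, Matrix.det_mul, Matrix.det_transpose, Matrix.det_smul, hJdet] at h1
  have hdet : g.det * g.det = (ν : ℤ_[p]) ^ 4 := by simpa using h1
  have hvv : (ν : ℤ_[p]) * ((ν⁻¹ : ℤ_[p]ˣ) : ℤ_[p]) = 1 := by exact_mod_cast ν.mul_inv
  have hu : IsUnit g.det := by
    refine IsUnit.of_mul_eq_one (g.det * ((ν⁻¹ : ℤ_[p]ˣ) : ℤ_[p]) ^ 4) ?_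
    linear_combination ((ν⁻¹ : ℤ_[p]ˣ) : ℤ_[p]) ^ 4 * hdet +
      (((ν : ℤ_[p]) * ((ν⁻¹ : ℤ_[p]ˣ) : ℤ_[p])) ^ 3 +
       ((ν : ℤ_[p]) * ((ν⁻¹ : ℤ_[p]ˣ) : ℤ_[p])) ^ 2 +
       (ν : ℤ_[p]) * ((ν⁻¹ : ℤ_[p]ˣ) : ℤ_[p]) + 1) * hvv
  set φ := (PadicInt.toZMod : ℤ_[p] →+* ZMod p) with hφ
  have hphi : IsUnit (φ g.det) := hu.map φ
  have z20 : φ (g 2 0) = 0 := by obtain ⟨c, hc⟩ := h20; simp [hc]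
  have z21 : φ (g 2 1) = 0 := by obtain ⟨c, hc⟩ := h21; simp [hc]
  have z30 : φ (g 3 0) = 0 := by obtain ⟨c, hc⟩ := h30; simp [hc]
  have z31 : φ (g 3 1) = 0 := by obtain ⟨c, hc⟩ := h31; simp [hc]
  have hmap : (g.map φ).det =
      (φ (g 0 0) * φ (g 1 1) - φ (g 0 1) * φ (g 1 0)) *
      (φ (g 2 2) * φ (g 3 3) - φ (g 2 3) * φ (g 3 2)) := by
    rw [det_fin_four]
    simp only [Matrix.map_apply, z20, z21, z30, z31]
    ring
  have hne : φ (g 0 0) * φ (g 1 1) - φ (g 0 1) * φ (g 1 0) ≠ 0 := by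
    intro h0
    have : φ g.det = 0 := by rw [RingHom.map_det, RingHom.mapMatrix_apply, hmap, h0, zero_mul]
    exact hphi.ne_zero this
  by_contra hnu
  have := (toZMod_zero_iff _).2 (dvd_of_not_isUnit hnu)
  rw [_root_.map_sub, _root_.map_mul, _root_.map_mul] at this
  exact hne this

lemma decompose {t : ℕ} (ht : 1 ≤ t)
    (g : Matrix (Fin 4) (Fin 4) ℤ_[p]) (ν : ℤ_[p]ˣ)
    (hν : gᵀ * Jmat ℤ_[p] * g = (ν : ℤ_[p]) • Jmat ℤ_[p])
    (h20 : (p:ℤ_[p])^t ∣ g 2 0) (h21 : (p:ℤ_[p])^t ∣ g 2 1)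
    (h30 : (p:ℤ_[p])^t ∣ g 3 0) (h31 : (p:ℤ_[p])^t ∣ g 3 1) :
    ∃ v : Fin p × Fin p × Fin p, ∃ H : Matrix (Fin 4) (Fin 4) ℤ_[p],
      InGSp4 H ∧
      ((p:ℤ_[p])^t ∣ H 2 0 ∧ (p:ℤ_[p])^t ∣ H 2 1 ∧
       (p:ℤ_[p])^t ∣ H 3 0 ∧ (p:ℤ_[p])^t ∣ H 3 1) ∧
      nbar ((p:ℤ_[p])^t * ((v.1 : ℕ) : ℤ_[p])) ((p:ℤ_[p])^t * ((v.2.1 : ℕ) : ℤ_[p]))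
        ((p:ℤ_[p])^t * ((v.2.2 : ℕ) : ℤ_[p])) * (sdiag (p:ℤ_[p]) * H)
        = g * sdiag (p:ℤ_[p]) := by
  have hp : p.Prime := Fact.out
  haveI : NeZero p := ⟨hp.ne_zero⟩
  have hp0 : (p:ℤ_[p]) ≠ 0 := Nat.cast_ne_zero.mpr hp.ne_zero
  have hpt : (p:ℤ_[p]) ∣ (p:ℤ_[p])^t := dvd_pow_self _ (by omega)
  have hA : IsUnit (g 0 0 * g 1 1 - g 0 1 * g 1 0) :=
    detA_isUnit ⟨ν, hν⟩ (hpt.trans h20) (hpt.trans h21) (hpt.trans h30) (hpt.trans h31)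
  obtain ⟨uA, huA⟩ := hA
  obtain ⟨e, he⟩ : ∃ x, x = ((uA⁻¹ : ℤ_[p]ˣ) : ℤ_[p]) := ⟨_, rfl⟩
  have hde : (g 0 0 * g 1 1 - g 0 1 * g 1 0) * e = 1 := by
    rw [he, ← huA]; exact_mod_cast uA.mul_inv
  have rel : g 0 0 * g 3 1 + g 1 0 * g 2 1 - g 2 0 * g 1 1 - g 3 0 * g 0 1 = 0 := by
    have h := congrArg (fun M => M 0 1) hν
    simp [Jmat, Matrix.mul_apply, Fin.sum_univ_four, Matrix.vecHead, Matrix.vecTail,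
      Matrix.smul_apply] at h
    linear_combination h
  obtain ⟨b1, hg20⟩ := h20
  obtain ⟨b2, hg21⟩ := h21
  obtain ⟨b3, hg30⟩ := h30
  obtain ⟨b4, hg31⟩ := h31
  have hb : b1 * g 1 1 - b2 * g 1 0 + b3 * g 0 1 - b4 * g 0 0 = 0 := by
    apply mul_left_cancel₀ (pow_ne_zero t hp0)
    rw [mul_zero]
    linear_combination (-1) * rel - g 1 1 * hg20 + g 1 0 * hg21 - g 0 1 * hg30 + g 0 0 * hg31
  obtain ⟨μ1, hμ1⟩ : ∃ x, x = e * (b1 * g 1 1 - b2 * g 1 0) := ⟨_, rfl⟩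
  obtain ⟨μ2, hμ2⟩ : ∃ x, x = e * (b2 * g 0 0 - b1 * g 0 1) := ⟨_, rfl⟩
  obtain ⟨μ3, hμ3⟩ : ∃ x, x = e * (b3 * g 1 1 - b4 * g 1 0) := ⟨_, rfl⟩
  have hb1 : b1 = μ1 * g 0 0 + μ2 * g 1 0 := by
    linear_combination (-b1) * hde - g 0 0 * hμ1 - g 1 0 * hμ2
  have hb2 : b2 = μ1 * g 0 1 + μ2 * g 1 1 := by
    linear_combination (-b2) * hde - g 0 1 * hμ1 - g 1 1 * hμ2
  have hb3 : b3 = μ3 * g 0 0 + μ1 * g 1 0 := by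
    linear_combination (-b3) * hde - e * g 1 0 * hb - g 0 0 * hμ3 - g 1 0 * hμ1
  have hb4 : b4 = μ3 * g 0 1 + μ1 * g 1 1 := by
    linear_combination (-b4) * hde - e * g 1 1 * hb - g 0 1 * hμ3 - g 1 1 * hμ1
  obtain ⟨r1, hr1⟩ : (p:ℤ_[p]) ∣ μ1 - ((PadicInt.toZMod μ1).val : ℤ_[p]) := by
    rw [← toZMod_zero_iff, map_sub, map_natCast, ZMod.natCast_rightInverse _, sub_self]
  obtain ⟨r2, hr2⟩ : (p:ℤ_[p]) ∣ μ2 - ((PadicInt.toZMod μ2).val : ℤ_[p]) := by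
    rw [← toZMod_zero_iff, map_sub, map_natCast, ZMod.natCast_rightInverse _, sub_self]
  obtain ⟨r3, hr3⟩ : (p:ℤ_[p]) ∣ μ3 - ((PadicInt.toZMod μ3).val : ℤ_[p]) := by
    rw [← toZMod_zero_iff, map_sub, map_natCast, ZMod.natCast_rightInverse _, sub_self]
  obtain ⟨hGSp, hE, hkey⟩ := buildH (p:ℤ_[p]) hp0 g ν hν
    ((p:ℤ_[p])^t * ((PadicInt.toZMod μ1).val : ℤ_[p]))
    ((p:ℤ_[p])^t * ((PadicInt.toZMod μ2).val : ℤ_[p]))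
    ((p:ℤ_[p])^t * ((PadicInt.toZMod μ3).val : ℤ_[p]))
    ((p:ℤ_[p])^t * (r1 * g 0 0 + r2 * g 1 0))
    ((p:ℤ_[p])^t * (r1 * g 0 1 + r2 * g 1 1))
    ((p:ℤ_[p])^t * (r3 * g 0 0 + r1 * g 1 0))
    ((p:ℤ_[p])^t * (r3 * g 0 1 + r1 * g 1 1))
    _ rfl
    (by linear_combination hg20 + (p:ℤ_[p])^t * hb1 + (p:ℤ_[p])^t * g 0 0 * hr1
          + (p:ℤ_[p])^t * g 1 0 * hr2)
    (by linear_combination hg21 + (p:ℤ_[p])^t * hb2 + (p:ℤ_[p])^t * g 0 1 * hr1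
          + (p:ℤ_[p])^t * g 1 1 * hr2)
    (by linear_combination hg30 + (p:ℤ_[p])^t * hb3 + (p:ℤ_[p])^t * g 0 0 * hr3
          + (p:ℤ_[p])^t * g 1 0 * hr1)
    (by linear_combination hg31 + (p:ℤ_[p])^t * hb4 + (p:ℤ_[p])^t * g 0 1 * hr3
          + (p:ℤ_[p])^t * g 1 1 * hr1)
  obtain ⟨hE20, hE21, hE30, hE31⟩ := hE
  exact ⟨(⟨(PadicInt.toZMod μ1).val, ZMod.val_lt _⟩, ⟨(PadicInt.toZMod μ2).val, ZMod.val_lt _⟩,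
      ⟨(PadicInt.toZMod μ3).val, ZMod.val_lt _⟩), _, ⟨ν, hGSp⟩,
    ⟨hE20 ▸ dvd_mul_right _ _, hE21 ▸ dvd_mul_right _ _,
     hE30 ▸ dvd_mul_right _ _, hE31 ▸ dvd_mul_right _ _⟩, hkey⟩

lemma map_matmul (A B : Matrix (Fin 4) (Fin 4) ℤ_[p]) :
    (A * B).map (fun a : ℤ_[p] => (a : ℚ_[p]))
      = A.map (fun a => (a : ℚ_[p])) * B.map (fun a => (a : ℚ_[p])) :=
  Matrix.map_mul (f := PadicInt.Coe.ringHom)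

lemma map_inj {A B : Matrix (Fin 4) (Fin 4) ℤ_[p]}
    (h : A.map (fun a => (a : ℚ_[p])) = B.map (fun a => (a : ℚ_[p]))) : A = B := by
  ext i j
  have := congrArg (fun M => M i j) h
  simp only [Matrix.map_apply] at this
  exact Subtype.coe_injective this

lemma map_sdiag : (sdiag (p : ℤ_[p])).map (fun a => (a : ℚ_[p])) = sMat p := by
  ext i j
  fin_cases i <;> fin_cases j <;>
    simp [sdiag, sMat, Matrix.map_apply, Matrix.vecHead, Matrix.vecTail]

lemma map_nbar (a b c : ℤ_[p]) :
    (nbar a b c).map (fun x => (x : ℚ_[p])) = nbar (a : ℚ_[p]) (b : ℚ_[p]) (c : ℚ_[p]) := by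
  ext i j
  fin_cases i <;> fin_cases j <;>
    simp [nbar, Matrix.map_apply, Matrix.vecHead, Matrix.vecTail]

lemma nbar20 (a b c : ℤ_[p]) : nbar a b c 2 0 = a := rfl
lemma nbar21 (a b c : ℤ_[p]) : nbar a b c 2 1 = b := rfl
lemma nbar30 (a b c : ℤ_[p]) : nbar a b c 3 0 = c := rfl
lemma nbar31 (a b c : ℤ_[p]) : nbar a b c 3 1 = a := rfl

lemma cast_arg (t : ℕ) (x : Fin p) :
    ((((p:ℤ_[p])^t * ((x : ℕ) : ℤ_[p])) : ℤ_[p]) : ℚ_[p])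
      = (p : ℚ_[p])^t * ((x : ℕ) : ℚ_[p]) := by
  push_cast
  ring

lemma map_form (t : ℕ) (v : Fin p × Fin p × Fin p) (G : Matrix (Fin 4) (Fin 4) ℤ_[p]) :
    nbar ((p : ℚ_[p]) ^ t * ((v.1 : ℕ) : ℚ_[p])) ((p : ℚ_[p]) ^ t * ((v.2.1 : ℕ) : ℚ_[p]))
        ((p : ℚ_[p]) ^ t * ((v.2.2 : ℕ) : ℚ_[p])) * sMat p * G.map (fun a => (a : ℚ_[p]))
      = (nbar ((p:ℤ_[p])^t * ((v.1 : ℕ) : ℤ_[p])) ((p:ℤ_[p])^t * ((v.2.1 : ℕ) : ℤ_[p]))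
          ((p:ℤ_[p])^t * ((v.2.2 : ℕ) : ℤ_[p])) * (sdiag (p:ℤ_[p]) * G)).map
            (fun a => (a : ℚ_[p])) := by
  rw [map_matmul, map_matmul, map_nbar, map_sdiag, cast_arg, cast_arg, cast_arg,
    Matrix.mul_assoc]

lemma K_mul {t : ℕ} {k k' : Matrix (Fin 4) (Fin 4) ℚ_[p]}
    (hk : k ∈ SiegelParahoric p t) (hk' : k' ∈ SiegelParahoric p t) :
    k * k' ∈ SiegelParahoric p t := by
  obtain ⟨g, rfl, hg, d1, d2, d3, d4⟩ := hk
  obtain ⟨g', rfl, hg', e1, e2, e3, e4⟩ := hk'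
  refine ⟨g * g', (map_matmul g g').symm, hg.mul hg', ?_, ?_, ?_, ?_⟩ <;>
    rw [Matrix.mul_apply, Fin.sum_univ_four]
  · exact dvd_add (dvd_add (dvd_add (d1.mul_right _) (d2.mul_right _))
      (e1.mul_left _)) (e3.mul_left _)
  · exact dvd_add (dvd_add (dvd_add (d1.mul_right _) (d2.mul_right _))
      (e2.mul_left _)) (e4.mul_left _)
  · exact dvd_add (dvd_add (dvd_add (d3.mul_right _) (d4.mul_right _))
      (e1.mul_left _)) (e3.mul_left _)
  · exact dvd_add (dvd_add (dvd_add (d3.mul_right _) (d4.mul_right _))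
      (e2.mul_left _)) (e4.mul_left _)

end Padic

/-- The double coset `K·s·K` is the disjoint union of the `p³` left cosets
`n̄(p^t x, p^t y, p^t z)·s·K`, as `(x,y,z)` ranges over `{0,…,p−1}³`. -/
theorem stmt8 (p : ℕ) [Fact p.Prime] (t : ℕ) (ht : 1 ≤ t) :
    {m : Matrix (Fin 4) (Fin 4) ℚ_[p] |
        ∃ k₁ ∈ SiegelParahoric p t, ∃ k₂ ∈ SiegelParahoric p t,
          m = k₁ * sMat p * k₂} =
      (⋃ v : Fin p × Fin p × Fin p, Ucoset p t v) ∧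
    ∀ v w : Fin p × Fin p × Fin p, v ≠ w → Disjoint (Ucoset p t v) (Ucoset p t w) := by

  have hp : p.Prime := Fact.out
  haveI : NeZero p := ⟨hp.ne_zero⟩
  have hp0 : (p:ℤ_[p]) ≠ 0 := Nat.cast_ne_zero.mpr hp.ne_zero
  have hpt : (p:ℤ_[p]) ∣ (p:ℤ_[p])^t := dvd_pow_self _ (by omega)
  constructor
  · ext m
    simp only [Set.mem_setOf_eq, Set.mem_iUnion]
    constructor
    · rintro ⟨k₁, ⟨g1, rfl, ⟨ν1, hν1⟩, d20, d21, d30, d31⟩, k₂, hk₂, rfl⟩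
      obtain ⟨v, H, HG, ⟨e20, e21, e30, e31⟩, hkey⟩ := decompose ht g1 ν1 hν1 d20 d21 d30 d31
      refine ⟨v, H.map (fun a => (a : ℚ_[p])) * k₂,
        K_mul ⟨H, rfl, HG, e20, e21, e30, e31⟩ hk₂, ?_⟩
      calc g1.map (fun a => (a : ℚ_[p])) * sMat p * k₂
          = ((g1 * sdiag (p:ℤ_[p])).map (fun a => (a : ℚ_[p]))) * k₂ := by
            rw [map_matmul, map_sdiag]
        _ = ((nbar ((p:ℤ_[p])^t * ((v.1 : ℕ) : ℤ_[p])) ((p:ℤ_[p])^t * ((v.2.1 : ℕ) : ℤ_[p]))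
              ((p:ℤ_[p])^t * ((v.2.2 : ℕ) : ℤ_[p])) * (sdiag (p:ℤ_[p]) * H)).map
                (fun a => (a : ℚ_[p]))) * k₂ := by rw [hkey]
        _ = nbar ((p : ℚ_[p]) ^ t * ((v.1 : ℕ) : ℚ_[p])) ((p : ℚ_[p]) ^ t * ((v.2.1 : ℕ) : ℚ_[p]))
              ((p : ℚ_[p]) ^ t * ((v.2.2 : ℕ) : ℚ_[p])) * sMat p *
                (H.map (fun a => (a : ℚ_[p]))) * k₂ := by rw [map_form]
        _ = _ := by rw [Matrix.mul_assoc]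
    · rintro ⟨v, k, hk, rfl⟩
      refine ⟨_, ⟨nbar ((p:ℤ_[p])^t * ((v.1 : ℕ) : ℤ_[p])) ((p:ℤ_[p])^t * ((v.2.1 : ℕ) : ℤ_[p]))
          ((p:ℤ_[p])^t * ((v.2.2 : ℕ) : ℤ_[p])), ?_, ⟨1, by rw [nbar_J]; simp⟩,
          by rw [nbar20]; exact dvd_mul_right _ _,
          by rw [nbar21]; exact dvd_mul_right _ _,
          by rw [nbar30]; exact dvd_mul_right _ _,
          by rw [nbar31]; exact dvd_mul_right _ _⟩, k, hk, rfl⟩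
      rw [map_nbar, cast_arg, cast_arg, cast_arg]
  · intro v w hvw
    rw [Set.disjoint_left]
    rintro m ⟨k, ⟨gk, rfl, kG, kd20, kd21, kd30, kd31⟩, rfl⟩
      ⟨k', ⟨gk', rfl, kG', kd20', kd21', kd30', kd31'⟩, hm⟩
    rw [map_form, map_form] at hm
    have hZ := map_inj hm
    set φ := (PadicInt.toZMod : ℤ_[p] →+* ZMod p) with hφdef
    obtain ⟨b1, hb1⟩ := kd20
    obtain ⟨b2, hb2⟩ := kd21
    obtain ⟨b3, hb3⟩ := kd30
    obtain ⟨b4, hb4⟩ := kd31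
    obtain ⟨b1', hb1'⟩ := kd20'
    obtain ⟨b2', hb2'⟩ := kd21'
    obtain ⟨b3', hb3'⟩ := kd30'
    obtain ⟨b4', hb4'⟩ := kd31'
    have E00 := congrArg (fun M => M 0 0) hZ
    have E01 := congrArg (fun M => M 0 1) hZ
    have E10 := congrArg (fun M => M 1 0) hZ
    have E11 := congrArg (fun M => M 1 1) hZ
    have F20 := congrArg (fun M => M 2 0) hZ
    have F21 := congrArg (fun M => M 2 1) hZ
    have F30 := congrArg (fun M => M 3 0) hZ
    have F31 := congrArg (fun M => M 3 1) hZ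
    simp only [nbar, sdiag] at E00 E01 E10 E11 F20 F21 F30 F31
    simp [Matrix.mul_apply, Matrix.vecMul, dotProduct, Fin.sum_univ_four,
      Matrix.vecHead, Matrix.vecTail] at E00 E01 E10 E11 F20 F21 F30 F31
    -- now scalar equations
    have key20 : (p:ℤ_[p])^t * (((v.1 : ℕ) : ℤ_[p]) * gk 0 0 + ((v.2.1 : ℕ) : ℤ_[p]) * gk 1 0
          + (p:ℤ_[p]) * b1)
        = (p:ℤ_[p])^t * (((w.1 : ℕ) : ℤ_[p]) * gk 0 0 + ((w.2.1 : ℕ) : ℤ_[p]) * gk 1 0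
          + (p:ℤ_[p]) * b1') := by
      linear_combination F20 - (p:ℤ_[p]) * hb1 + (p:ℤ_[p]) * hb1'
        - (p:ℤ_[p])^t * ((w.1 : ℕ) : ℤ_[p]) * E00 - (p:ℤ_[p])^t * ((w.2.1 : ℕ) : ℤ_[p]) * E10
    have key21 : (p:ℤ_[p])^t * (((v.1 : ℕ) : ℤ_[p]) * gk 0 1 + ((v.2.1 : ℕ) : ℤ_[p]) * gk 1 1
          + (p:ℤ_[p]) * b2)
        = (p:ℤ_[p])^t * (((w.1 : ℕ) : ℤ_[p]) * gk 0 1 + ((w.2.1 : ℕ) : ℤ_[p]) * gk 1 1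
          + (p:ℤ_[p]) * b2') := by
      linear_combination F21 - (p:ℤ_[p]) * hb2 + (p:ℤ_[p]) * hb2'
        - (p:ℤ_[p])^t * ((w.1 : ℕ) : ℤ_[p]) * E01 - (p:ℤ_[p])^t * ((w.2.1 : ℕ) : ℤ_[p]) * E11
    have key30 : (p:ℤ_[p])^t * (((v.2.2 : ℕ) : ℤ_[p]) * gk 0 0 + ((v.1 : ℕ) : ℤ_[p]) * gk 1 0
          + (p:ℤ_[p]) * b3)
        = (p:ℤ_[p])^t * (((w.2.2 : ℕ) : ℤ_[p]) * gk 0 0 + ((w.1 : ℕ) : ℤ_[p]) * gk 1 0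
          + (p:ℤ_[p]) * b3') := by
      linear_combination F30 - (p:ℤ_[p]) * hb3 + (p:ℤ_[p]) * hb3'
        - (p:ℤ_[p])^t * ((w.2.2 : ℕ) : ℤ_[p]) * E00 - (p:ℤ_[p])^t * ((w.1 : ℕ) : ℤ_[p]) * E10
    have key31 : (p:ℤ_[p])^t * (((v.2.2 : ℕ) : ℤ_[p]) * gk 0 1 + ((v.1 : ℕ) : ℤ_[p]) * gk 1 1
          + (p:ℤ_[p]) * b4)
        = (p:ℤ_[p])^t * (((w.2.2 : ℕ) : ℤ_[p]) * gk 0 1 + ((w.1 : ℕ) : ℤ_[p]) * gk 1 1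
          + (p:ℤ_[p]) * b4') := by
      linear_combination F31 - (p:ℤ_[p]) * hb4 + (p:ℤ_[p]) * hb4'
        - (p:ℤ_[p])^t * ((w.2.2 : ℕ) : ℤ_[p]) * E01 - (p:ℤ_[p])^t * ((w.1 : ℕ) : ℤ_[p]) * E11
    have c20 := mul_left_cancel₀ (pow_ne_zero t hp0) key20
    have c21 := mul_left_cancel₀ (pow_ne_zero t hp0) key21
    have c30 := mul_left_cancel₀ (pow_ne_zero t hp0) key30
    have c31 := mul_left_cancel₀ (pow_ne_zero t hp0) key31
    have z20 := congrArg φ c20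
    have z21 := congrArg φ c21
    have z30 := congrArg φ c30
    have z31 := congrArg φ c31
    simp only [map_add, _root_.map_mul, map_natCast, ZMod.natCast_self, zero_mul,
      add_zero] at z20 z21 z30 z31
    have hA : IsUnit (gk 0 0 * gk 1 1 - gk 0 1 * gk 1 0) :=
      detA_isUnit kG (hpt.trans ⟨b1, hb1⟩) (hpt.trans ⟨b2, hb2⟩)
        (hpt.trans ⟨b3, hb3⟩) (hpt.trans ⟨b4, hb4⟩)
    have hφd : φ (gk 0 0) * φ (gk 1 1) - φ (gk 0 1) * φ (gk 1 0) ≠ 0 := by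
      have h1 : IsUnit (φ (gk 0 0 * gk 1 1 - gk 0 1 * gk 1 0)) := hA.map φ
      rw [_root_.map_sub, _root_.map_mul, _root_.map_mul] at h1
      exact h1.ne_zero
    have hv1 : ((v.1 : ℕ) : ZMod p) = ((w.1 : ℕ) : ZMod p) := by
      have hα : (((v.1 : ℕ) : ZMod p) - ((w.1 : ℕ) : ZMod p)) *
          (φ (gk 0 0) * φ (gk 1 1) - φ (gk 0 1) * φ (gk 1 0)) = 0 := by
        linear_combination φ (gk 1 1) * z20 - φ (gk 1 0) * z21
      rcases mul_eq_zero.mp hα with h | h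
      · exact sub_eq_zero.mp h
      · exact absurd h hφd
    have hv2 : ((v.2.1 : ℕ) : ZMod p) = ((w.2.1 : ℕ) : ZMod p) := by
      have hα : (((v.2.1 : ℕ) : ZMod p) - ((w.2.1 : ℕ) : ZMod p)) *
          (φ (gk 0 0) * φ (gk 1 1) - φ (gk 0 1) * φ (gk 1 0)) = 0 := by
        linear_combination φ (gk 0 0) * z21 - φ (gk 0 1) * z20
      rcases mul_eq_zero.mp hα with h | h
      · exact sub_eq_zero.mp h
      · exact absurd h hφd
    have hv3 : ((v.2.2 : ℕ) : ZMod p) = ((w.2.2 : ℕ) : ZMod p) := by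
      have hα : (((v.2.2 : ℕ) : ZMod p) - ((w.2.2 : ℕ) : ZMod p)) *
          (φ (gk 0 0) * φ (gk 1 1) - φ (gk 0 1) * φ (gk 1 0)) = 0 := by
        linear_combination φ (gk 1 1) * z30 - φ (gk 1 0) * z31
      rcases mul_eq_zero.mp hα with h | h
      · exact sub_eq_zero.mp h
      · exact absurd h hφd
    apply hvw
    have q1 : v.1 = w.1 := by
      apply Fin.ext
      have := congrArg ZMod.val hv1
      rwa [ZMod.val_cast_of_lt v.1.isLt, ZMod.val_cast_of_lt w.1.isLt] at this
    have q2 : v.2.1 = w.2.1 := by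
      apply Fin.ext
      have := congrArg ZMod.val hv2
      rwa [ZMod.val_cast_of_lt v.2.1.isLt, ZMod.val_cast_of_lt w.2.1.isLt] at this
    have q3 : v.2.2 = w.2.2 := by
      apply Fin.ext
      have := congrArg ZMod.val hv3
      rwa [ZMod.val_cast_of_lt v.2.2.isLt, ZMod.val_cast_of_lt w.2.2.isLt] at this
    exact Prod.ext q1 (Prod.ext q2 q3)
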